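/- For pairwise distinct vectors v_1,...,v_N ∈ ℝ^n, the function q ↦ det[q^{⟨v_j,v_k⟩}]_{1≤j,k≤N}, defined for q > 0, is not identically zero; in particular there exists q > 0 with det[q^{⟨v_j,v_k⟩}] ≠ 0. -/

import Mathlib

open Filter Topology Finset

theorem det_q_inner_not_identically_zero (n N : ℕ) (v : Fin N → EuclideanSpace ℝ (Fin n))
    (hv : Function.Injective v) :
    ∃ q : ℝ, 0 < q ∧
      Matrix.det (Matrix.of fun j k : Fin N => q ^ (inner ℝ (v j) (v k) : ℝ)) ≠ 0 := by
  classical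
  set S : Equiv.Perm (Fin N) → ℝ := fun σ => ∑ i, (inner ℝ (v (σ i)) (v i) : ℝ) with hSdef
  -- S σ < S 1 for σ ≠ 1
  have hSlt : ∀ σ : Equiv.Perm (Fin N), σ ≠ 1 → S σ < S 1 := by
    intro σ hσ
    have hnorm : ∀ i, ‖v (σ i) - v i‖ ^ 2
        = ‖v (σ i)‖^2 + ‖v i‖^2 - 2 * (inner ℝ (v (σ i)) (v i) : ℝ) := by
      intro i
      rw [@norm_sub_sq_real]; ring
    have hperm : ∑ i, ‖v (σ i)‖^2 = ∑ i, ‖v i‖^2 := Equiv.sum_comp σ (fun i => ‖v i‖^2)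
    have hSid : S 1 = ∑ i, ‖v i‖^2 := by
      rw [hSdef]
      exact Finset.sum_congr rfl fun i _ => real_inner_self_eq_norm_sq _
    have h2 : ∑ i, ‖v (σ i) - v i‖ ^ 2 = 2 * (S 1 - S σ) := by
      rw [Finset.sum_congr rfl fun i _ => hnorm i]
      rw [Finset.sum_sub_distrib, Finset.sum_add_distrib, hperm, ← Finset.mul_sum]
      rw [hSid, hSdef]
      ring
    have hpos : 0 < ∑ i, ‖v (σ i) - v i‖ ^ 2 := by
      obtain ⟨i, hi⟩ : ∃ i, σ i ≠ i := by
        by_contra h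
        push_neg at h
        exact hσ (Equiv.ext h)
      refine Finset.sum_pos' (fun j _ => by positivity) ⟨i, Finset.mem_univ i, ?_⟩
      have : v (σ i) ≠ v i := fun h => hi (hv h)
      have : v (σ i) - v i ≠ 0 := sub_ne_zero_of_ne this
      exact pow_pos (norm_pos_iff.mpr this) 2
    rw [h2] at hpos
    linarith
  -- the normalized sum tends to 1
  set F : ℝ → ℝ := fun q =>
    ∑ σ : Equiv.Perm (Fin N), (Equiv.Perm.sign σ : ℝ) * q ^ (S σ - S 1) with hFdef
  have hF : Tendsto F atTop (𝓝 1) := by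
    have h1 : (1 : ℝ) = ∑ σ : Equiv.Perm (Fin N),
        (if σ = 1 then (1 : ℝ) else 0) := by simp
    rw [h1]
    apply tendsto_finset_sum
    intro σ _
    by_cases hσ : σ = 1
    · subst hσ
      simp only [if_pos rfl]
      have : ∀ q : ℝ, (Equiv.Perm.sign (1 : Equiv.Perm (Fin N)) : ℝ) * q ^ (S 1 - S 1) = 1 := by
        intro q; simp [Real.rpow_zero]
      simp_rw [this]
      exact tendsto_const_nhds
    · simp only [if_neg hσ]
      have hy : 0 < S 1 - S σ := by linarith [hSlt σ hσ]
      have := (tendsto_rpow_neg_atTop hy).const_mul ((Equiv.Perm.sign σ : ℤ) : ℝ)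
      rw [mul_zero] at this
      refine this.congr fun q => ?_
      rw [neg_sub]
  have hFne : ∀ᶠ q in atTop, F q ≠ 0 := hF.eventually_ne one_ne_zero
  obtain ⟨q, hq0, hFq⟩ : ∃ q : ℝ, 0 < q ∧ F q ≠ 0 := by
    rcases (hFne.and (eventually_gt_atTop (0 : ℝ))).exists with ⟨q, h1, h2⟩
    exact ⟨q, h2, h1⟩
  refine ⟨q, hq0, ?_⟩
  have hprod : ∀ (f : Fin N → ℝ), (∏ i, q ^ f i) = q ^ (∑ i, f i) := by
    intro f
    calc ∏ i, q ^ f i = ∏ i, Real.exp (Real.log q * f i) := by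
          simp_rw [Real.rpow_def_of_pos hq0]
      _ = Real.exp (∑ i, Real.log q * f i) := (Real.exp_sum _ _).symm
      _ = q ^ (∑ i, f i) := by rw [← Finset.mul_sum, ← Real.rpow_def_of_pos hq0]
  have hdet : Matrix.det (Matrix.of fun j k : Fin N => q ^ (inner ℝ (v j) (v k) : ℝ))
      = q ^ (S 1) * F q := by
    rw [Matrix.det_apply]
    rw [hFdef, Finset.mul_sum]
    refine Finset.sum_congr rfl fun σ _ => ?_
    have : (∏ i, (Matrix.of fun j k : Fin N => q ^ (inner ℝ (v j) (v k) : ℝ)) (σ i) i)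
        = q ^ S σ := by
      rw [hSdef]
      exact hprod _
    rw [this]
    have : q ^ S σ = q ^ S 1 * q ^ (S σ - S 1) := by
      rw [← Real.rpow_add hq0]; ring_nf
    rw [this]
    simp only [zsmul_eq_mul, Units.smul_def]
    ring
  rw [hdet]
  exact mul_ne_zero (Real.rpow_pos_of_pos hq0 _).ne' hFq
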